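/- arXiv:0909.3138 — 3 statements merged into one kernel-verified Lean document; each statement's English description precedes it below -/
import Mathlib

section
/- Let G be a finite connected simple graph with at least two vertices and w an injective real-valued edge weight function. Then the maximum edge weight occurring in the minimal spanning tree MST(G,w) is less than or equal to the maximum edge weight occurring in any other spanning tree of G; that is, the minimal spanning tree is also a minimum-bottleneck spanning tree. -/
open scoped BigOperators symmDiff

variable {V : Type*}

/-- The total weight of (the edges of) a graph `T`, for a weight function `w` on `Sym2 V`. -/
noncomputable def edgeWeight (w : Sym2 V → ℝ) (T : SimpleGraph V) : ℝ :=
  ∑ᶠ e ∈ T.edgeSet, w e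

/-- `T` is a spanning tree of `G`: a subgraph of `G` (on the same, full vertex set)
that is connected and acyclic. -/
def IsSpanningTree (G T : SimpleGraph V) : Prop := T ≤ G ∧ T.IsTree

/-- `T` is a minimal spanning tree of `G` with respect to the weights `w`. -/
def IsMST (G : SimpleGraph V) (w : Sym2 V → ℝ) (T : SimpleGraph V) : Prop :=
  IsSpanningTree G T ∧
    ∀ T' : SimpleGraph V, IsSpanningTree G T' → edgeWeight w T ≤ edgeWeight w T'

/-- Deleting one edge `s(u,v)` from a graph, every vertex that could reach `u` can
still reach `u` or `v`. -/
lemma reach_del {H : SimpleGraph V} {u v : V} : ∀ {x : V}, H.Walk x u →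
    (H.deleteEdges {s(u, v)}).Reachable x u ∨ (H.deleteEdges {s(u, v)}).Reachable x v
  | _, SimpleGraph.Walk.nil => Or.inl (SimpleGraph.Reachable.refl _)
  | x, SimpleGraph.Walk.cons (v := y) h q => by
    have ih := reach_del (v := v) q
    by_cases hxy : s(x, y) = s(u, v)
    · rw [Sym2.eq_iff] at hxy
      rcases hxy with ⟨rfl, rfl⟩ | ⟨rfl, rfl⟩
      · exact Or.inl (SimpleGraph.Reachable.refl _)
      · exact Or.inr (SimpleGraph.Reachable.refl _)
    · have hadj : (H.deleteEdges {s(u, v)}).Adj x y := by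
        rw [SimpleGraph.deleteEdges_adj]
        exact ⟨h, by simpa using hxy⟩
      rcases ih with h' | h'
      · exact Or.inl (hadj.reachable.trans h')
      · exact Or.inr (hadj.reachable.trans h')

/-- A walk from inside a set `S` to outside `S` uses an edge crossing `S`. -/
lemma crossing_edge {H : SimpleGraph V} {S : Set V} {y : V} :
    ∀ {x : V}, (p : H.Walk x y) → x ∈ S → y ∉ S →
    ∃ a b, s(a, b) ∈ p.edges ∧ a ∈ S ∧ b ∉ S
  | _, SimpleGraph.Walk.nil, hx, hy => absurd hx hy
  | x, SimpleGraph.Walk.cons (v := z) h q, hx, hy => by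
    by_cases hz : z ∈ S
    · obtain ⟨a, b, hab, haS, hbS⟩ := crossing_edge q hz hy
      exact ⟨a, b, by simp [hab], haS, hbS⟩
    · exact ⟨x, z, by simp, hx, hz⟩

/-- the MST is a minimum-bottleneck spanning tree: its maximum edge weight
is at most the maximum edge weight of any other spanning tree. -/
theorem mst_is_min_bottleneck [Fintype V] (hcard : 1 < Fintype.card V)
    (G : SimpleGraph V) (hG : G.Connected)
    (w : Sym2 V → ℝ) (hw : Set.InjOn w G.edgeSet)
    (T : SimpleGraph V) (hT : IsMST G w T)
    (T' : SimpleGraph V) (hT' : IsSpanningTree G T') :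
    sSup (w '' T.edgeSet) ≤ sSup (w '' T'.edgeSet) := by
  classical
  have hbdd : BddAbove (w '' T'.edgeSet) := ((Set.toFinite T'.edgeSet).image w).bddAbove
  have hTconn : T.Connected := hT.1.2.isConnected
  have hTacyc : T.IsAcyclic := hT.1.2.IsAcyclic
  -- T has at least one edge
  have hne : T.edgeSet.Nonempty := by
    obtain ⟨x, y, hxy⟩ := Fintype.exists_pair_of_one_lt_card hcard
    obtain ⟨p⟩ := hTconn.preconnected x y
    cases p with
    | nil => exact absurd rfl hxy
    | cons h q => exact ⟨_, T.mem_edgeSet.mpr h⟩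
  apply csSup_le (hne.image w)
  rintro _ ⟨e, heT, rfl⟩
  induction e using Sym2.ind with
  | _ u v =>
  have huv : T.Adj u v := heT
  set D := T.deleteEdges {s(u, v)} with hD
  -- v is not reachable from u after deleting the edge
  have hbridge : ¬ D.Reachable u v := by
    have hb : T.IsBridge s(u, v) := (SimpleGraph.isAcyclic_iff_forall_adj_isBridge.mp hTacyc) huv
    exact SimpleGraph.isBridge_iff.mp hb
  have hvS : ¬ D.Reachable v u := fun h => hbridge h.symm
  -- a crossing edge of T'
  obtain ⟨p⟩ := hT'.2.isConnected.preconnected u v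
  obtain ⟨a, b, hfp, haS, hbS⟩ :=
    crossing_edge (S := {x | D.Reachable x u}) p (SimpleGraph.Reachable.refl _) hvS
  have hfT' : s(a, b) ∈ T'.edgeSet := p.edges_subset_edgeSet hfp
  have hab : a ≠ b := (T'.mem_edgeSet.mp hfT').ne
  have key : w s(u, v) ≤ w s(a, b) := by
    by_contra hlt
    push_neg at hlt
    have hfne : s(a, b) ≠ s(u, v) := fun h => by rw [h] at hlt; exact lt_irrefl _ hlt
    -- the crossing edge is not in T
    have hfnotT : s(a, b) ∉ T.edgeSet := by
      intro h
      have hDadj : D.Adj a b := by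
        rw [hD, SimpleGraph.deleteEdges_adj]
        exact ⟨h, by simpa using hfne⟩
      exact hbS (hDadj.symm.reachable.trans haS)
    set T'' := D ⊔ SimpleGraph.fromEdgeSet {s(a, b)} with hT''
    have hDle : D ≤ T'' := le_sup_left
    have hT''adj : T''.Adj a b := by
      have : (SimpleGraph.fromEdgeSet {s(a, b)}).Adj a b :=
        (SimpleGraph.fromEdgeSet_adj _).mpr ⟨rfl, hab⟩
      exact (SimpleGraph.sup_adj _ _ _ _).mpr (Or.inr this)
    have hT''le : T'' ≤ G := by
      apply sup_le ((T.deleteEdges_le _).trans hT.1.1)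
      calc SimpleGraph.fromEdgeSet {s(a, b)}
          ≤ SimpleGraph.fromEdgeSet T'.edgeSet :=
            SimpleGraph.fromEdgeSet_mono (Set.singleton_subset_iff.mpr hfT')
        _ = T' := T'.fromEdgeSet_edgeSet
        _ ≤ G := hT'.1
    -- connectivity of T''
    have hbv : D.Reachable b v := by
      obtain ⟨q⟩ := hTconn.preconnected b u
      rcases reach_del (v := v) q with h | h
      · exact absurd h hbS
      · exact h
    have hreach_vu : T''.Reachable v u :=
      ((hbv.symm).mono hDle).trans ((hT''adj.symm.reachable).trans (haS.mono hDle))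
    have hconn : T''.Connected := by
      have hNe : Nonempty V := Fintype.card_pos_iff.mp (by omega)
      constructor
      intro x y
      have hx : ∀ z : V, T''.Reachable z u := by
        intro z
        obtain ⟨q⟩ := hTconn.preconnected z u
        rcases reach_del (v := v) q with h | h
        · exact h.mono hDle
        · exact (h.mono hDle).trans hreach_vu
      exact (hx x).trans (hx y).symm
    -- acyclicity of T''
    have hacyc : T''.IsAcyclic := by
      intro x c hc
      by_cases hfc : s(a, b) ∈ c.edges
      · have hnb : ¬ T''.IsBridge s(a, b) := by
          rw [SimpleGraph.isBridge_iff_forall_cycle_notMem (T''.mem_edgeSet.mpr hT''adj)]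
          push_neg
          exact ⟨x, c, hc, hfc⟩
        have hr : (T''.deleteEdges {s(a, b)}).Reachable a b := by
          by_contra hre
          exact hnb (SimpleGraph.isBridge_iff.mpr hre)
        have hle : T''.deleteEdges {s(a, b)} ≤ D := by
          intro x' y' hxy
          rw [SimpleGraph.deleteEdges_adj] at hxy
          obtain ⟨hxy1, hxy2⟩ := hxy
          rcases (SimpleGraph.sup_adj _ _ _ _).mp hxy1 with h | h
          · exact h
          · exact absurd ((SimpleGraph.fromEdgeSet_adj _).mp h).1 hxy2
        exact hbS (((hr.symm).mono hle).trans haS)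
      · have hsub : ∀ e' ∈ c.edges, e' ∈ T.edgeSet := by
          intro e' he'
          have hmem := c.edges_subset_edgeSet he'
          rw [hT'', SimpleGraph.edgeSet_sup, hD, SimpleGraph.edgeSet_deleteEdges,
            SimpleGraph.edgeSet_fromEdgeSet] at hmem
          rcases hmem with h | h
          · exact h.1
          · exact absurd (h.1 ▸ he') hfc
        exact hTacyc (c.transfer T hsub) (hc.transfer hsub)
    have hsp : IsSpanningTree G T'' := ⟨hT''le, ⟨hconn, hacyc⟩⟩
    -- edge weights
    have hfin1 : (T.edgeSet \ {s(u, v)}).Finite := Set.toFinite _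
    have hdisj1 : Disjoint (T.edgeSet \ {s(u, v)}) {s(u, v)} :=
      Set.disjoint_singleton_right.mpr (fun h => h.2 rfl)
    have h1 : edgeWeight w T = (∑ᶠ e ∈ T.edgeSet \ {s(u, v)}, w e) + w s(u, v) := by
      have hsplit : T.edgeSet = (T.edgeSet \ {s(u, v)}) ∪ {s(u, v)} :=
        (Set.diff_union_of_subset (Set.singleton_subset_iff.mpr heT)).symm
      rw [edgeWeight]
      conv_lhs => rw [hsplit]
      rw [finsum_mem_union hdisj1 hfin1 (Set.finite_singleton _), finsum_mem_singleton]
    have h2 : T''.edgeSet = (T.edgeSet \ {s(u, v)}) ∪ {s(a, b)} := by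
      rw [hT'', SimpleGraph.edgeSet_sup, hD, SimpleGraph.edgeSet_deleteEdges,
        SimpleGraph.edgeSet_fromEdgeSet]
      congr 1
      ext e'
      simp only [Set.mem_diff, Set.mem_singleton_iff, Set.mem_setOf_eq]
      constructor
      · exact fun h => h.1
      · rintro rfl
        exact ⟨rfl, by simp [Sym2.mk_isDiag_iff, hab]⟩
    have hdisj2 : Disjoint (T.edgeSet \ {s(u, v)}) {s(a, b)} :=
      Set.disjoint_singleton_right.mpr (fun h => hfnotT h.1)
    have h3 : edgeWeight w T'' = (∑ᶠ e ∈ T.edgeSet \ {s(u, v)}, w e) + w s(a, b) := by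
      rw [edgeWeight, h2, finsum_mem_union hdisj2 hfin1 (Set.finite_singleton _),
        finsum_mem_singleton]
    have hmin := hT.2 T'' hsp
    rw [h1, h3] at hmin
    linarith
  exact key.trans (le_csSup hbdd ⟨s(a, b), hfT', rfl⟩)
end

section
/- Let G be a finite connected simple graph and w an injective real-valued edge weight function. For every λ ∈ ℝ, the number of edges of the minimal spanning tree MST(G,w) with weight strictly greater than λ equals the number of λ-clusters of G minus one. -/
open scoped BigOperators symmDiff

variable {V : Type*}

open SimpleGraph

section Helpers

lemma reach_trans_of_adj {H K : SimpleGraph V} (h : ∀ a b : V, H.Adj a b → K.Reachable a b)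
    {x y : V} (hxy : H.Reachable x y) : K.Reachable x y := by
  obtain ⟨p⟩ := hxy
  induction p with
  | nil => exact Reachable.refl _
  | cons ha _ ih => exact (h _ _ ha).trans ih

lemma delete_edge_reach_cases {F : SimpleGraph V} (u v : V) {x y : V} (p : F.Walk x y) :
    (F \ fromEdgeSet {s(u,v)}).Reachable x y ∨
      ((F \ fromEdgeSet {s(u,v)}).Reachable x u ∧ (F \ fromEdgeSet {s(u,v)}).Reachable v y) ∨
      ((F \ fromEdgeSet {s(u,v)}).Reachable x v ∧ (F \ fromEdgeSet {s(u,v)}).Reachable u y) := by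
  induction p with
  | nil => exact Or.inl (Reachable.refl _)
  | @cons x z y ha q ih =>
    by_cases he : s(x, z) = s(u, v)
    · rw [Sym2.eq_iff] at he
      rcases he with ⟨rfl, rfl⟩ | ⟨rfl, rfl⟩
      · rcases ih with h | ⟨h1, h2⟩ | ⟨h1, h2⟩
        · exact Or.inr (Or.inl ⟨Reachable.refl _, h⟩)
        · exact Or.inr (Or.inl ⟨Reachable.refl _, h2⟩)
        · exact Or.inl h2
      · rcases ih with h | ⟨h1, h2⟩ | ⟨h1, h2⟩
        · exact Or.inr (Or.inr ⟨Reachable.refl _, h⟩)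
        · exact Or.inl h2
        · exact Or.inr (Or.inr ⟨Reachable.refl _, h2⟩)
    · have hadj : (F \ fromEdgeSet {s(u,v)}).Adj x z := by
        rw [sdiff_adj]
        exact ⟨ha, by simp [fromEdgeSet_adj, he]⟩
      have hr := hadj.reachable
      rcases ih with h | ⟨h1, h2⟩ | ⟨h1, h2⟩
      · exact Or.inl (hr.trans h)
      · exact Or.inr (Or.inl ⟨hr.trans h1, h2⟩)
      · exact Or.inr (Or.inr ⟨hr.trans h1, h2⟩)

noncomputable def ccEquivOfIff {H K : SimpleGraph V}
    (h : ∀ x y : V, H.Reachable x y ↔ K.Reachable x y) :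
    H.ConnectedComponent ≃ K.ConnectedComponent where
  toFun := Quot.map id fun a b hab => (h a b).mp hab
  invFun := Quot.map id fun a b hab => (h a b).mpr hab
  left_inv c := c.ind fun _ => rfl
  right_inv c := c.ind fun _ => rfl

lemma acyclic_mono {H K : SimpleGraph V} (hle : H ≤ K) (hK : K.IsAcyclic) : H.IsAcyclic := by
  intro v c hc
  exact hK (c.map (Hom.ofLE hle))
    ((Walk.map_isCycle_iff_of_injective (fun _ _ h => h)).mpr hc)

lemma card_cc_delete_eq_succ [Fintype V] {F : SimpleGraph V} {u v : V} (huv : F.Adj u v)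
    (hb : ¬(F \ fromEdgeSet {s(u, v)}).Reachable u v) :
    Nat.card (F \ fromEdgeSet {s(u, v)}).ConnectedComponent
      = Nat.card F.ConnectedComponent + 1 := by
  classical
  set F' := F \ fromEdgeSet {s(u, v)} with hF'
  have hle : F' ≤ F := sdiff_le
  letI : Fintype F'.ConnectedComponent := Fintype.ofFinite _
  letI : Fintype F.ConnectedComponent := Fintype.ofFinite _
  set m : F'.ConnectedComponent → F.ConnectedComponent :=
    Quot.map id (fun a b hab => hab.mono hle) with hm
  have hmmk : ∀ x : V, m (F'.connectedComponentMk x) = F.connectedComponentMk x := fun _ => rfl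
  have key : ∀ (x y : V), F.Reachable x y →
      F'.Reachable x y ∨ (F'.Reachable x u ∧ F'.Reachable v y) ∨
        (F'.Reachable x v ∧ F'.Reachable u y) := by
    rintro x y ⟨p⟩; exact delete_edge_reach_cases u v p
  have hcard : ∀ c : F.ConnectedComponent,
      (Finset.univ.filter fun d => m d = c).card
        = if c = F.connectedComponentMk u then 2 else 1 := by
    intro c
    obtain ⟨x, rfl⟩ := c.exists_rep
    rw [show (Quot.mk F.Reachable x) = F.connectedComponentMk x from rfl]
    by_cases hc : F.connectedComponentMk x = F.connectedComponentMk u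
    · rw [if_pos hc]
      have : (Finset.univ.filter fun d => m d = F.connectedComponentMk x)
          = {F'.connectedComponentMk u, F'.connectedComponentMk v} := by
        ext d
        simp only [Finset.mem_filter, Finset.mem_univ, true_and, Finset.mem_insert,
          Finset.mem_singleton]
        constructor
        · intro hd
          obtain ⟨y, rfl⟩ := d.exists_rep
          rw [show (Quot.mk F'.Reachable y) = F'.connectedComponentMk y from rfl] at hd ⊢
          rw [hmmk] at hd
          have hyx : F.Reachable y x := (ConnectedComponent.eq).mp hd
          have hxu : F.Reachable x u := (ConnectedComponent.eq).mp hc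
          rcases key y u (hyx.trans hxu) with h | ⟨h1, h2⟩ | ⟨h1, h2⟩
          · exact Or.inl (ConnectedComponent.sound h)
          · exact Or.inl (ConnectedComponent.sound h1)
          · exact Or.inr (ConnectedComponent.sound h1)
        · rintro (rfl | rfl)
          · rw [hmmk]; exact hc.symm
          · rw [hmmk]
            exact (ConnectedComponent.sound huv.reachable).symm.trans hc.symm
      rw [this, Finset.card_insert_of_notMem, Finset.card_singleton]
      simp only [Finset.mem_singleton]
      intro hEq
      exact hb ((ConnectedComponent.eq).mp hEq)
    · rw [if_neg hc]
      have : (Finset.univ.filter fun d => m d = F.connectedComponentMk x)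
          = {F'.connectedComponentMk x} := by
        ext d
        simp only [Finset.mem_filter, Finset.mem_univ, true_and, Finset.mem_singleton]
        constructor
        · intro hd
          obtain ⟨y, rfl⟩ := d.exists_rep
          rw [show (Quot.mk F'.Reachable y) = F'.connectedComponentMk y from rfl] at hd ⊢
          rw [hmmk] at hd
          have hyx : F.Reachable y x := (ConnectedComponent.eq).mp hd
          rcases key y x hyx with h | ⟨h1, h2⟩ | ⟨h1, h2⟩
          · exact ConnectedComponent.sound h
          · exact absurd ((ConnectedComponent.sound huv.reachable).trans
              (ConnectedComponent.sound (h2.mono hle))).symm hc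
          · exact absurd (ConnectedComponent.sound (h2.mono hle)).symm hc
        · rintro rfl; exact hmmk x
      rw [this, Finset.card_singleton]
  have hsum : Fintype.card F'.ConnectedComponent
      = ∑ c : F.ConnectedComponent, (Finset.univ.filter fun d => m d = c).card := by
    rw [← Finset.card_univ]
    exact Finset.card_eq_sum_card_fiberwise fun d _ => Finset.mem_univ _
  rw [Nat.card_eq_fintype_card, Nat.card_eq_fintype_card, hsum]
  have : ∀ c : F.ConnectedComponent, (Finset.univ.filter fun d => m d = c).card
      = 1 + if c = F.connectedComponentMk u then 1 else 0 := by
    intro c; rw [hcard c]; split <;> rfl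
  rw [Finset.sum_congr rfl fun c _ => this c, Finset.sum_add_distrib]
  simp [Finset.sum_ite_eq', Finset.card_univ, Nat.add_comm]

noncomputable def ccBotEquiv : (⊥ : SimpleGraph V).ConnectedComponent ≃ V where
  toFun := Quot.lift id fun _ _ hab => reachable_bot.mp hab
  invFun := Quot.mk _
  left_inv c := c.ind fun _ => rfl
  right_inv _ := rfl

lemma forest_count [Fintype V] (n : ℕ) (F : SimpleGraph V) (hF : F.IsAcyclic)
    (hn : F.edgeSet.ncard = n) :
    F.edgeSet.ncard + Nat.card F.ConnectedComponent = Fintype.card V := by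
  classical
  induction n generalizing F with
  | zero =>
    have hbot : F = ⊥ := by
      rw [← edgeSet_eq_empty]
      exact (Set.ncard_eq_zero (Set.toFinite _)).mp hn
    subst hbot
    rw [hn, Nat.card_congr ccBotEquiv, Nat.card_eq_fintype_card, Nat.zero_add]
  | succ n ih =>
    have hne : F.edgeSet.Nonempty := by
      rw [Set.nonempty_iff_ne_empty]
      intro hemp
      rw [hemp, Set.ncard_empty] at hn
      omega
    obtain ⟨e, he⟩ := hne
    induction e using Sym2.ind with
    | _ u v =>
    have hadj : F.Adj u v := (mem_edgeSet F).mp he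
    have hbridge : ¬(F \ fromEdgeSet {s(u, v)}).Reachable u v :=
      isBridge_iff.mp (isAcyclic_iff_forall_edge_isBridge.mp hF he)
    set F' := F \ fromEdgeSet {s(u, v)} with hF'def
    have hle : F' ≤ F := sdiff_le
    have hF'acyclic : F'.IsAcyclic := acyclic_mono hle hF
    have hedge : F'.edgeSet = F.edgeSet \ {s(u, v)} := by
      rw [hF'def, edgeSet_sdiff, edgeSet_fromEdgeSet]
      ext g
      simp only [Set.mem_diff, Set.mem_singleton_iff, Set.mem_setOf_eq, not_and, not_not]
      constructor
      · rintro ⟨hg, hg2⟩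
        refine ⟨hg, fun hEq => ?_⟩
        exact (F.not_isDiag_of_mem_edgeSet hg) (hg2 hEq)
      · rintro ⟨hg, hg2⟩
        exact ⟨hg, fun hEq => absurd hEq hg2⟩
    have hncard : F'.edgeSet.ncard = n := by
      rw [hedge, Set.ncard_diff_singleton_of_mem he, hn]
      omega
    have := ih F' hF'acyclic hncard
    rw [card_cc_delete_eq_succ hadj hbridge] at this
    omega

/-- The exchange argument: any `G`-edge of weight `≤ lam` connects its endpoints
within the low-weight part of the MST. -/
lemma mst_adj_reach [Fintype V] {G : SimpleGraph V} {w : Sym2 V → ℝ}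
    {T : SimpleGraph V} (hT : IsMST G w T) (lam : ℝ) {a b : V}
    (hG : G.Adj a b) (hwab : w s(a, b) ≤ lam) :
    (fromEdgeSet {e | e ∈ T.edgeSet ∧ w e ≤ lam}).Reachable a b := by
  classical
  obtain ⟨⟨hTG, hTree⟩, hmin⟩ := hT
  obtain ⟨p0⟩ : T.Reachable a b := hTree.isConnected.preconnected a b
  set P : T.Path a b := p0.toPath with hPdef
  have hab : a ≠ b := hG.ne
  have hall : ∀ f ∈ (P : T.Walk a b).edges, w f ≤ lam := by
    by_contra hcon
    push_neg at hcon
    obtain ⟨f, hfP, hf⟩ := hcon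
    have hfT : f ∈ T.edgeSet := (P : T.Walk a b).edges_subset_edgeSet hfP
    revert hfP hf hfT
    induction f using Sym2.ind with
    | _ c d =>
    intro hfP hf hfT
    have hcd : c ≠ d := fun hEq => (T.not_isDiag_of_mem_edgeSet hfT) (by simp [hEq])
    set T1 := T \ fromEdgeSet {s(c, d)} with hT1def
    have hT1T : T1 ≤ T := sdiff_le
    have hcdT1 : s(c, d) ∉ T1.edgeSet := by
      rw [hT1def, edgeSet_sdiff, edgeSet_fromEdgeSet]
      intro hmem
      exact hmem.2 ⟨rfl, fun hEq => (T.not_isDiag_of_mem_edgeSet hfT) hEq⟩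
    have hnr : ¬T1.Reachable a b := by
      rintro ⟨q⟩
      set q' : T.Walk a b := q.map (Hom.ofLE hT1T) with hq'def
      have hq'e : s(c, d) ∉ q'.edges := by
        intro hmem
        rw [hq'def, Walk.edges_map] at hmem
        obtain ⟨g, hg, hg2⟩ := List.mem_map.mp hmem
        have : g = s(c, d) := by
          simpa [Sym2.map_id'] using hg2
        exact hcdT1 (this ▸ q.edges_subset_edgeSet hg)
      have hPeq : q'.toPath = P := hTree.IsAcyclic.path_unique _ _
      exact hq'e (Walk.edges_toPath_subset q' (hPeq ▸ hfP))
    set T' := T1 ⊔ fromEdgeSet {s(a, b)} with hT'def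
    have hT1le : T1 ≤ T' := le_sup_left
    have habT' : T'.Adj a b := by
      rw [hT'def, sup_adj]
      exact Or.inr ((fromEdgeSet_adj _).mpr ⟨rfl, hab⟩)
    have hcdreach : T'.Reachable c d := by
      rcases delete_edge_reach_cases c d (P : T.Walk a b) with h | ⟨h1, h2⟩ | ⟨h1, h2⟩
      · exact absurd h hnr
      · exact ((h1.mono hT1le).symm.trans habT'.reachable).trans (h2.mono hT1le).symm
      · exact ((h2.mono hT1le).trans habT'.reachable.symm).trans (h1.mono hT1le)
    have hconn : T'.Connected := by
      rw [connected_iff]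
      refine ⟨fun x y => ?_, hTree.isConnected.nonempty⟩
      refine reach_trans_of_adj (fun x' y' hxy => ?_) (hTree.isConnected.preconnected x y)
      by_cases hE : s(x', y') = s(c, d)
      · rw [Sym2.eq_iff] at hE
        rcases hE with ⟨rfl, rfl⟩ | ⟨rfl, rfl⟩
        · exact hcdreach
        · exact hcdreach.symm
      · refine Adj.reachable (hT1le ?_)
        rw [hT1def, sdiff_adj]
        exact ⟨hxy, by simp [fromEdgeSet_adj, hE]⟩
    have hacyc : T'.IsAcyclic := by
      intro x cyc hcyc
      by_cases hmem : s(a, b) ∈ cyc.edges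
      · have h2 := (adj_and_reachable_delete_edges_iff_exists_cycle.mpr ⟨x, cyc, hcyc, hmem⟩).2
        apply hnr
        refine h2.mono ?_
        rw [← edgeSet_subset_edgeSet]
        intro g hg
        change g ∈ (T' \ fromEdgeSet {s(a, b)}).edgeSet at hg
        rw [edgeSet_sdiff] at hg
        obtain ⟨hg1, hg2⟩ := hg
        rw [hT'def, edgeSet_sup] at hg1
        rcases hg1 with h | h
        · exact h
        · exact absurd h hg2
      · have hsub : ∀ g ∈ cyc.edges, g ∈ T.edgeSet := by
          intro g hg
          have hgE := cyc.edges_subset_edgeSet hg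
          rw [hT'def, edgeSet_sup] at hgE
          rcases hgE with h | h
          · exact (edgeSet_subset_edgeSet.mpr hT1T) h
          · rw [edgeSet_fromEdgeSet] at h
            exact absurd (h.1 ▸ hg) hmem
        exact hTree.IsAcyclic (cyc.transfer T hsub) (hcyc.transfer hsub)
    have hT'G : T' ≤ G := by
      rw [hT'def]
      refine sup_le (le_trans hT1T hTG) ?_
      intro x y hxy
      rw [fromEdgeSet_adj] at hxy
      obtain ⟨h1, _⟩ := hxy
      rw [Set.mem_singleton_iff, Sym2.eq_iff] at h1
      rcases h1 with ⟨rfl, rfl⟩ | ⟨rfl, rfl⟩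
      · exact hG
      · exact hG.symm
    have hsabT : s(a, b) ∉ T.edgeSet := by
      intro hmem
      have hPsing : P = SimpleGraph.Path.singleton ((mem_edgeSet T).mp hmem) :=
        hTree.IsAcyclic.path_unique _ _
      rw [hPsing] at hfP
      simp only [SimpleGraph.Path.singleton, Walk.edges_cons, Walk.edges_nil,
        List.mem_singleton] at hfP
      rw [hfP] at hf
      linarith
    have hET' : T'.edgeSet = (T.edgeSet \ {s(c, d)}) ∪ {s(a, b)} := by
      rw [hT'def, edgeSet_sup, hT1def, edgeSet_sdiff, edgeSet_fromEdgeSet, edgeSet_fromEdgeSet]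
      congr 1
      · ext g
        simp only [Set.mem_diff, Set.mem_singleton_iff, Set.mem_setOf_eq, not_and, not_not]
        constructor
        · rintro ⟨hg, hg2⟩
          exact ⟨hg, fun hEq => (T.not_isDiag_of_mem_edgeSet hg) (hg2 hEq)⟩
        · rintro ⟨hg, hg2⟩
          exact ⟨hg, fun hEq => absurd hEq hg2⟩
      · ext g
        simp only [Set.mem_diff, Set.mem_singleton_iff, Set.mem_setOf_eq]
        constructor
        · rintro ⟨hg, _⟩; exact hg
        · rintro rfl
          exact ⟨rfl, by simp [hab]⟩
    have hWT' : edgeWeight w T' = (∑ᶠ e ∈ T.edgeSet \ {s(c, d)}, w e) + w s(a, b) := by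
      rw [edgeWeight, hET', finsum_mem_union ?_ (Set.toFinite _) (Set.toFinite _),
        finsum_mem_singleton]
      rw [Set.disjoint_singleton_right]
      exact fun h => hsabT h.1
    have hWT : edgeWeight w T = (∑ᶠ e ∈ T.edgeSet \ {s(c, d)}, w e) + w s(c, d) := by
      rw [edgeWeight]
      conv_lhs => rw [← Set.diff_union_of_subset (Set.singleton_subset_iff.mpr hfT)]
      rw [finsum_mem_union ?_ (Set.toFinite _) (Set.toFinite _), finsum_mem_singleton]
      rw [Set.disjoint_singleton_right]
      exact fun h => h.2 rfl
    have hle := hmin T' ⟨hT'G, ⟨hconn, hacyc⟩⟩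
    rw [hWT, hWT'] at hle
    linarith
  refine ⟨(P : T.Walk a b).transfer _ ?_⟩
  intro f hfp
  have hfT := (P : T.Walk a b).edges_subset_edgeSet hfp
  rw [edgeSet_fromEdgeSet]
  exact ⟨⟨hfT, hall f hfp⟩, T.not_isDiag_of_mem_edgeSet hfT⟩

end Helpers

/-- the number of MST edges of weight `> λ` equals the number of
λ-clusters of `G` minus one. -/
theorem mst_card_edges_above_level [Fintype V] (G : SimpleGraph V) (hG : G.Connected)
    (w : Sym2 V → ℝ) (hw : Set.InjOn w G.edgeSet)
    (T : SimpleGraph V) (hT : IsMST G w T) (lam : ℝ) :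
    {e | e ∈ T.edgeSet ∧ lam < w e}.ncard =
      Nat.card (SimpleGraph.fromEdgeSet {e | e ∈ G.edgeSet ∧ w e ≤ lam}).ConnectedComponent
        - 1 := by
  classical
  obtain ⟨⟨hTG, hTree⟩, hmin⟩ := hT
  set A : Set (Sym2 V) := {e | e ∈ T.edgeSet ∧ w e ≤ lam} with hAdef
  set B : Set (Sym2 V) := {e | e ∈ T.edgeSet ∧ lam < w e} with hBdef
  set Tlam := fromEdgeSet A with hTlamdef
  set Glam := fromEdgeSet {e | e ∈ G.edgeSet ∧ w e ≤ lam} with hGlamdef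
  -- edge count of the tree
  letI : Fintype T.edgeSet := Fintype.ofFinite _
  have htreecard : T.edgeSet.ncard + 1 = Fintype.card V := by
    rw [Set.ncard_eq_toFinset_card']
    exact hTree.card_edgeFinset
  -- B = edgeSet \ A
  have hBeq : B = T.edgeSet \ A := by
    ext g
    simp only [hBdef, hAdef, Set.mem_setOf_eq, Set.mem_diff, not_and, not_le]
    constructor
    · rintro ⟨h1, h2⟩; exact ⟨h1, fun _ => h2⟩
    · rintro ⟨h1, h2⟩; exact ⟨h1, h2 h1⟩
  have hAsub : A ⊆ T.edgeSet := fun g hg => hg.1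
  have hBcard : B.ncard = T.edgeSet.ncard - A.ncard := by
    rw [hBeq, Set.ncard_diff hAsub (Set.toFinite _)]
  have hAcardle : A.ncard ≤ T.edgeSet.ncard := Set.ncard_le_ncard hAsub (Set.toFinite _)
  -- Tlam is a forest with edge set A
  have hTlamle : Tlam ≤ T := by
    rw [hTlamdef]
    calc fromEdgeSet A ≤ fromEdgeSet T.edgeSet := fromEdgeSet_mono hAsub
    _ = T := fromEdgeSet_edgeSet T
  have hTlamE : Tlam.edgeSet = A := by
    rw [hTlamdef, edgeSet_fromEdgeSet]
    ext g
    simp only [Set.mem_diff, Set.mem_setOf_eq]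
    constructor
    · rintro ⟨hg, _⟩; exact hg
    · intro hg
      exact ⟨hg, T.not_isDiag_of_mem_edgeSet hg.1⟩
  have hforest := forest_count A.ncard Tlam (acyclic_mono hTlamle hTree.IsAcyclic)
    (by rw [hTlamE])
  rw [hTlamE] at hforest
  -- components of Tlam ↔ components of Glam
  have hTlamGlam : Tlam ≤ Glam := by
    rw [hTlamdef, hGlamdef]
    refine fromEdgeSet_mono ?_
    rintro g ⟨hg1, hg2⟩
    exact ⟨edgeSet_subset_edgeSet.mpr hTG hg1, hg2⟩
  have hreach : ∀ x y : V, Tlam.Reachable x y ↔ Glam.Reachable x y := by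
    intro x y
    constructor
    · exact fun h => h.mono hTlamGlam
    · refine fun h => reach_trans_of_adj (fun a b hab => ?_) h
      rw [hGlamdef, fromEdgeSet_adj] at hab
      obtain ⟨⟨h1, h2⟩, _⟩ := hab
      exact mst_adj_reach ⟨⟨hTG, hTree⟩, hmin⟩ lam ((mem_edgeSet G).mp h1) h2
  have hcc : Nat.card Tlam.ConnectedComponent = Nat.card Glam.ConnectedComponent :=
    Nat.card_congr (ccEquivOfIff hreach)
  omega
end

section
/- Let G be a finite connected simple graph and w an injective real-valued edge weight function. The set T* of edges e = {x,y} of G such that x and y are not connected in the subgraph of G consisting of the edges of weight strictly less than w(e) is a spanning tree of G, and for every spanning tree T' of G with T' ≠ T*, the total weight of T* is strictly less than the total weight of T'. -/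
open scoped BigOperators symmDiff

variable {V : Type*}

/-- The graph `T*` whose edges are the edges `e = {x,y}` of `G` such that `x` and `y`
are not connected using only edges of `G` of weight strictly less than `w e`. -/
def TstarGraph (G : SimpleGraph V) (w : Sym2 V → ℝ) : SimpleGraph V :=
  SimpleGraph.fromEdgeSet
    {e | e ∈ G.edgeSet ∧ ∀ x y : V, e = s(x, y) →
      ¬ (SimpleGraph.fromEdgeSet {f | f ∈ G.edgeSet ∧ w f < w e}).Reachable x y}

open SimpleGraph in
/-- Removing an edge from a cycle keeps its endpoints connected using the remaining
edges of the cycle. -/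
lemma cycle_surgery {H : SimpleGraph V} {u : V} {c : H.Walk u u} (hc : c.IsCycle)
    {e : Sym2 V} (he : e ∈ c.edges) {a b : V} (hab : e = s(a, b)) :
    (SimpleGraph.fromEdgeSet {g | g ∈ c.edges ∧ g ≠ e}).Reachable a b := by
  classical
  set K := SimpleGraph.fromEdgeSet {g | g ∈ c.edges} with hK
  have hsub : ∀ g ∈ c.edges, g ∈ K.edgeSet := by
    intro g hg
    rw [hK, edgeSet_fromEdgeSet]
    exact ⟨hg, H.not_isDiag_of_mem_edgeSet (c.edges_subset_edgeSet hg)⟩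
  have hcyc : (c.transfer K hsub).IsCycle := hc.transfer hsub
  have he' : s(a, b) ∈ (c.transfer K hsub).edges := by
    rw [Walk.edges_transfer]; exact hab ▸ he
  have hreach : (K \ SimpleGraph.fromEdgeSet {s(a, b)}).Reachable a b :=
    (adj_and_reachable_delete_edges_iff_exists_cycle.mpr
      ⟨u, c.transfer K hsub, hcyc, he'⟩).2
  refine hreach.mono ?_
  intro x y hxy
  rw [sdiff_adj] at hxy
  obtain ⟨hKxy, hne⟩ := hxy
  rw [fromEdgeSet_adj] at hKxy ⊢
  obtain ⟨hmem, hxyne⟩ := hKxy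
  refine ⟨⟨hmem, ?_⟩, hxyne⟩
  intro heq
  exact hne (by rw [fromEdgeSet_adj]; exact ⟨by simp [heq, hab], hxyne⟩)

open SimpleGraph in
lemma reachable_of_adj_reachable {A B : SimpleGraph V}
    (h : ∀ x y : V, A.Adj x y → B.Reachable x y) {x y : V} (hr : A.Reachable x y) :
    B.Reachable x y := by
  obtain ⟨p⟩ := hr
  induction p with
  | nil => exact Reachable.refl _
  | cons ha _ ih => exact (h _ _ ha).trans ih

open SimpleGraph in
lemma mem_Tstar_iff {G : SimpleGraph V} {w : Sym2 V → ℝ} {e : Sym2 V} :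
    e ∈ (TstarGraph G w).edgeSet ↔ e ∈ G.edgeSet ∧ ∀ x y : V, e = s(x, y) →
      ¬ (SimpleGraph.fromEdgeSet {f | f ∈ G.edgeSet ∧ w f < w e}).Reachable x y := by
  rw [TstarGraph, edgeSet_fromEdgeSet]
  constructor
  · exact fun h => h.1
  · exact fun h => ⟨h, G.not_isDiag_of_mem_edgeSet h.1⟩

open SimpleGraph in
lemma Tstar_reachable [Fintype V] (G : SimpleGraph V) (w : Sym2 V → ℝ) :
    ∀ e ∈ G.edgeSet, ∀ a b : V, e = s(a, b) → (TstarGraph G w).Reachable a b := by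
  classical
  set S : Sym2 V → Finset (Sym2 V) :=
    fun e => (Set.toFinite {f | f ∈ G.edgeSet ∧ w f < w e}).toFinset with hS
  suffices key : ∀ n : ℕ, ∀ e ∈ G.edgeSet, (S e).card < n →
      ∀ a b : V, e = s(a, b) → (TstarGraph G w).Reachable a b by
    intro e he a b hab
    exact key ((S e).card + 1) e he (Nat.lt_succ_self _) a b hab
  intro n
  induction n with
  | zero => exact fun e _ h => absurd h (Nat.not_lt_zero _)
  | succ n ih =>
    intro e he hm a b hab
    by_cases hT : e ∈ (TstarGraph G w).edgeSet
    · exact ((SimpleGraph.mem_edgeSet _).mp (hab ▸ hT)).reachable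
    · rw [mem_Tstar_iff] at hT
      push_neg at hT
      obtain ⟨x, y, hxy, hr⟩ := hT he
      have hr' : (SimpleGraph.fromEdgeSet
          {f | f ∈ G.edgeSet ∧ w f < w e}).Reachable a b := by
        rcases Sym2.eq_iff.mp (hab.symm.trans hxy) with ⟨rfl, rfl⟩ | ⟨rfl, rfl⟩
        · exact hr
        · exact hr.symm
      refine reachable_of_adj_reachable ?_ hr'
      intro u v huv
      rw [fromEdgeSet_adj] at huv
      obtain ⟨⟨hguv, hwlt⟩, _⟩ := huv
      refine ih s(u, v) hguv ?_ u v rfl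
      have hssub : S s(u, v) ⊂ S e := by
        constructor
        · intro g hg
          rw [hS, Set.Finite.mem_toFinset] at hg ⊢
          exact ⟨hg.1, hg.2.trans hwlt⟩
        · intro hsub
          have h1 : s(u, v) ∈ S e := by
            rw [hS, Set.Finite.mem_toFinset]; exact ⟨hguv, hwlt⟩
          have h2 := hsub h1
          rw [hS, Set.Finite.mem_toFinset] at h2
          exact lt_irrefl _ h2.2
      exact lt_of_lt_of_le (Finset.card_lt_card hssub) (Nat.lt_succ_iff.mp hm)

open SimpleGraph in
lemma Tstar_connected [Fintype V] {G : SimpleGraph V} (hG : G.Connected)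
    (w : Sym2 V → ℝ) : (TstarGraph G w).Connected := by
  haveI : Nonempty V := hG.nonempty
  refine ⟨fun a b => ?_⟩
  refine reachable_of_adj_reachable ?_ (hG.preconnected a b)
  intro x y hxy
  exact Tstar_reachable G w s(x, y) ((SimpleGraph.mem_edgeSet _).mpr hxy) x y rfl

open SimpleGraph in
lemma Tstar_acyclic [Fintype V] {G : SimpleGraph V} {w : Sym2 V → ℝ}
    (hw : Set.InjOn w G.edgeSet) : (TstarGraph G w).IsAcyclic := by
  classical
  intro v c hc
  have hlen : c.edges ≠ [] := by
    have h3 := hc.three_le_length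
    have := c.length_edges
    intro h
    rw [h] at this
    simp at this
    omega
  obtain ⟨g0, hg0⟩ := List.exists_mem_of_ne_nil _ hlen
  obtain ⟨e, heF, hmax⟩ := Finset.exists_max_image c.edges.toFinset w
    ⟨g0, List.mem_toFinset.mpr hg0⟩
  have he : e ∈ c.edges := List.mem_toFinset.mp heF
  have heTs : e ∈ (TstarGraph G w).edgeSet := c.edges_subset_edgeSet he
  obtain ⟨heG, hcond⟩ := mem_Tstar_iff.mp heTs
  have hGsub : ∀ g ∈ c.edges, g ∈ G.edgeSet := by
    intro g hg
    exact (mem_Tstar_iff.mp (c.edges_subset_edgeSet hg)).1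
  obtain ⟨a, b, hab⟩ : ∃ a b : V, e = s(a, b) := Sym2.exists.mp ⟨e, rfl⟩
  have hsurg := cycle_surgery hc he hab
  refine hcond a b hab (hsurg.mono ?_)
  intro x y hxy
  rw [fromEdgeSet_adj] at hxy ⊢
  obtain ⟨⟨hg, hgne⟩, hxyne⟩ := hxy
  refine ⟨⟨hGsub _ hg, ?_⟩, hxyne⟩
  exact lt_of_le_of_ne (hmax _ (List.mem_toFinset.mpr hg))
    (fun h => hgne (hw (hGsub _ hg) heG h))

open SimpleGraph in
/-- `T*` is a spanning tree of `G`, and its total weight is strictly less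
than that of every other spanning tree. -/
theorem tstar_is_unique_mst [Fintype V] (G : SimpleGraph V) (hG : G.Connected)
    (w : Sym2 V → ℝ) (hw : Set.InjOn w G.edgeSet) :
    IsSpanningTree G (TstarGraph G w) ∧
      ∀ T' : SimpleGraph V, IsSpanningTree G T' → T' ≠ TstarGraph G w →
        edgeWeight w (TstarGraph G w) < edgeWeight w T' := by
  classical
  have hTsG : TstarGraph G w ≤ G := by
    intro x y hxy
    exact (SimpleGraph.mem_edgeSet _).mp
      (mem_Tstar_iff.mp ((SimpleGraph.mem_edgeSet _).mpr hxy)).1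
  have htree : (TstarGraph G w).IsTree := ⟨Tstar_connected hG w, Tstar_acyclic hw⟩
  set Ts := TstarGraph G w with hTsdef
  let F : SimpleGraph V → Finset (Sym2 V) := fun T => (T.edgeSet.toFinite).toFinset
  have hFcoe : ∀ T : SimpleGraph V, ↑(F T) = T.edgeSet :=
    fun T => Set.Finite.coe_toFinset _
  have hFmem : ∀ (T : SimpleGraph V) (e : Sym2 V), e ∈ F T ↔ e ∈ T.edgeSet :=
    fun T e => Set.Finite.mem_toFinset _
  have hweight : ∀ T : SimpleGraph V, edgeWeight w T = ∑ e ∈ F T, w e := by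
    intro T
    rw [edgeWeight, ← hFcoe T, finsum_mem_coe_finset]
  have hcardtree : ∀ T : SimpleGraph V, T.IsTree → (F T).card + 1 = Fintype.card V := by
    intro T hT
    haveI : Fintype T.edgeSet := (T.edgeSet.toFinite).fintype
    have h := hT.card_edgeFinset
    have hEq : T.edgeFinset = F T :=
      Finset.coe_injective (by rw [hFcoe, coe_edgeFinset])
    rwa [hEq] at h
  have hcardTs : (F Ts).card + 1 = Fintype.card V := hcardtree Ts htree
  have main : ∀ n : ℕ, ∀ T' : SimpleGraph V, T' ≤ G → T'.Connected →
      (F T').card + 1 = Fintype.card V → T' ≠ Ts →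
      (F T' \ F Ts).card ≤ n → edgeWeight w Ts < edgeWeight w T' := by
    intro n
    induction n with
    | zero =>
      intro T' _ _ hcard hne hd
      exfalso
      have hsub : F T' ⊆ F Ts := by
        rw [← Finset.sdiff_eq_empty_iff_subset, ← Finset.card_eq_zero]
        omega
      have hFeq : F T' = F Ts := Finset.eq_of_subset_of_card_le hsub (by omega)
      exact hne (edgeSet_inj.mp (by rw [← hFcoe, ← hFcoe, hFeq]))
    | succ n ih =>
      intro T' hle hconn hcard hne hd
      by_cases hdn : (F T' \ F Ts).card ≤ n
      · exact ih T' hle hconn hcard hne hdn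
      -- find f ∈ F Ts \ F T'
      have hfex : ∃ f, f ∈ F Ts ∧ f ∉ F T' := by
        by_contra h
        push_neg at h
        have hsub : F Ts ⊆ F T' := fun f hf => h f hf
        have hFeq : F Ts = F T' := Finset.eq_of_subset_of_card_le hsub (by omega)
        exact hne (edgeSet_inj.mp (by rw [← hFcoe, ← hFcoe, hFeq])).symm
      obtain ⟨f, hfTs, hfT'⟩ := hfex
      have hfTs' : f ∈ Ts.edgeSet := (hFmem _ _).mp hfTs
      obtain ⟨hfG, hfcond⟩ := mem_Tstar_iff.mp hfTs'
      obtain ⟨x, y, hfxy⟩ : ∃ x y : V, f = s(x, y) := Sym2.exists.mp ⟨f, rfl⟩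
      have hxyG : G.Adj x y := (SimpleGraph.mem_edgeSet _).mp (hfxy ▸ hfG)
      have hxney : x ≠ y := hxyG.ne
      obtain ⟨p0⟩ := hconn.preconnected x y
      set P := p0.toPath with hP
      have hPsub : ∀ g ∈ (P : T'.Walk x y).edges, g ∈ G.edgeSet :=
        fun g hg => edgeSet_mono hle (Walk.edges_subset_edgeSet _ hg)
      set q : G.Walk x y := (P : T'.Walk x y).transfer G hPsub with hq
      have hqpath : q.IsPath := P.property.transfer hPsub
      have hqedges : q.edges = (P : T'.Walk x y).edges := by
        rw [hq, Walk.edges_transfer]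
      have hqT' : ∀ g ∈ q.edges, g ∈ T'.edgeSet := by
        rw [hqedges]
        exact fun g hg => Walk.edges_subset_edgeSet _ hg
      have hqG : ∀ g ∈ q.edges, g ∈ G.edgeSet := fun g hg => q.edges_subset_edgeSet hg
      have hfnotq : f ∉ q.edges := fun h => hfT' ((hFmem _ _).mpr (hqT' f h))
      have hqne : q.edges ≠ [] := by
        intro h
        have hlen0 : q.length = 0 := by
          have := q.length_edges
          rw [h] at this
          simpa using this.symm
        exact hxney (Walk.eq_of_length_eq_zero hlen0)
      obtain ⟨g0, hg0⟩ := List.exists_mem_of_ne_nil _ hqne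
      obtain ⟨e, heF, hmax⟩ := Finset.exists_max_image q.edges.toFinset w
        ⟨g0, List.mem_toFinset.mpr hg0⟩
      have heq : e ∈ q.edges := List.mem_toFinset.mp heF
      have heT' : e ∈ T'.edgeSet := hqT' e heq
      have heG : e ∈ G.edgeSet := hqG e heq
      have hef : e ≠ f := fun h => hfnotq (h ▸ heq)
      have hwfe : w f < w e := by
        have hgex : ∃ g ∈ q.edges, ¬ w g < w f := by
          by_contra h
          push_neg at h
          have hsub2 : ∀ g ∈ q.edges, g ∈ (SimpleGraph.fromEdgeSet
              {f' | f' ∈ G.edgeSet ∧ w f' < w f}).edgeSet := by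
            intro g hg
            rw [edgeSet_fromEdgeSet]
            exact ⟨⟨hqG g hg, h g hg⟩, G.not_isDiag_of_mem_edgeSet (hqG g hg)⟩
          exact hfcond x y hfxy ⟨q.transfer _ hsub2⟩
        obtain ⟨g, hg, hgw⟩ := hgex
        have h1 : w f ≤ w g := le_of_not_gt hgw
        have h2 : w g ≤ w e := hmax g (List.mem_toFinset.mpr hg)
        exact lt_of_le_of_ne (h1.trans h2) (fun h => hef (hw heG hfG h.symm))
      obtain ⟨a, b, heab⟩ : ∃ a b : V, e = s(a, b) := Sym2.exists.mp ⟨e, rfl⟩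
      set c : G.Walk y y := Walk.cons hxyG.symm q with hcdef
      have hcyc : c.IsCycle := by
        rw [hcdef, Walk.cons_isCycle_iff]
        refine ⟨hqpath, ?_⟩
        rw [Sym2.eq_swap, ← hfxy]
        exact hfnotq
      have hcedges : c.edges = s(y, x) :: q.edges := by rw [hcdef, Walk.edges_cons]
      have hec : e ∈ c.edges := by rw [hcedges]; exact List.mem_cons_of_mem _ heq
      have hsurg := cycle_surgery hcyc hec heab
      have hlight : ∀ g, g ∈ c.edges → g ≠ e → g ∈ G.edgeSet ∧ w g < w e := by
        intro g hg hgne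
        rw [hcedges] at hg
        rcases List.mem_cons.mp hg with rfl | hg'
        · rw [Sym2.eq_swap, ← hfxy]
          exact ⟨hfG, hwfe⟩
        · exact ⟨hqG g hg', lt_of_le_of_ne (hmax g (List.mem_toFinset.mpr hg'))
            (fun h => hgne (hw (hqG g hg') heG h))⟩
      have heTs : e ∉ Ts.edgeSet := by
        intro h
        refine (mem_Tstar_iff.mp h).2 a b heab (hsurg.mono ?_)
        intro u' v' huv
        rw [fromEdgeSet_adj] at huv ⊢
        obtain ⟨⟨hg, hgne⟩, hne'⟩ := huv
        exact ⟨hlight _ hg hgne, hne'⟩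
      set T2 : SimpleGraph V :=
        SimpleGraph.fromEdgeSet ((T'.edgeSet \ {e}) ∪ {f}) with hT2def
      have hT2edge : T2.edgeSet = (T'.edgeSet \ {e}) ∪ {f} := by
        rw [hT2def, edgeSet_fromEdgeSet]
        ext g
        simp only [Set.mem_diff, Set.mem_setOf_eq]
        refine ⟨fun h => h.1, fun h => ⟨h, ?_⟩⟩
        rcases h with ⟨hT'm, _⟩ | hfm
        · exact T'.not_isDiag_of_mem_edgeSet hT'm
        · rw [Set.mem_singleton_iff] at hfm
          exact G.not_isDiag_of_mem_edgeSet (hfm ▸ hfG)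
      have hT2F : F T2 = insert f ((F T').erase e) := by
        apply Finset.coe_injective
        rw [hFcoe, hT2edge, Finset.coe_insert, Finset.coe_erase, hFcoe,
          Set.union_singleton]
      have heFT' : e ∈ F T' := (hFmem _ _).mpr heT'
      have hfnotin : f ∉ (F T').erase e := fun h => hfT' (Finset.mem_of_mem_erase h)
      have hcardpos : 1 ≤ (F T').card := Finset.card_pos.mpr ⟨e, heFT'⟩
      have hT2card : (F T2).card + 1 = Fintype.card V := by
        rw [hT2F, Finset.card_insert_of_notMem hfnotin,
          Finset.card_erase_of_mem heFT']
        omega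
      have hwT2 : edgeWeight w T2 < edgeWeight w T' := by
        rw [hweight, hweight, hT2F, Finset.sum_insert hfnotin,
          ← Finset.add_sum_erase (F T') w heFT']
        exact add_lt_add_left hwfe _
      have hT2G : T2 ≤ G := by
        intro u' v' huv
        rw [hT2def, fromEdgeSet_adj] at huv
        obtain ⟨hmem, hne'⟩ := huv
        rcases hmem with ⟨hT'm, _⟩ | hfm
        · exact hle ((SimpleGraph.mem_edgeSet _).mp hT'm)
        · rw [Set.mem_singleton_iff] at hfm
          exact (SimpleGraph.mem_edgeSet _).mp (hfm ▸ hfG)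
      have hrab : T2.Reachable a b := by
        refine hsurg.mono ?_
        intro u' v' huv
        rw [fromEdgeSet_adj] at huv
        obtain ⟨⟨hg, hgne⟩, hne'⟩ := huv
        rw [hT2def, fromEdgeSet_adj]
        refine ⟨?_, hne'⟩
        rw [hcedges] at hg
        rcases List.mem_cons.mp hg with heq' | hg'
        · right
          rw [Set.mem_singleton_iff, heq', Sym2.eq_swap, ← hfxy]
        · exact Or.inl ⟨hqT' _ hg', hgne⟩
      have hT2conn : T2.Connected := by
        haveI : Nonempty V := hG.nonempty
        refine ⟨fun u' v' => ?_⟩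
        refine reachable_of_adj_reachable ?_ (hconn.preconnected u' v')
        intro s' t' hst
        by_cases hst' : s(s', t') = e
        · rcases Sym2.eq_iff.mp (hst'.trans heab) with ⟨rfl, rfl⟩ | ⟨rfl, rfl⟩
          · exact hrab
          · exact hrab.symm
        · refine SimpleGraph.Adj.reachable ?_
          rw [hT2def, fromEdgeSet_adj]
          exact ⟨Or.inl ⟨(SimpleGraph.mem_edgeSet _).mpr hst, hst'⟩, hst.ne⟩
      have heTsF : e ∉ F Ts := fun h => heTs ((hFmem _ _).mp h)
      have hsdiff : F T2 \ F Ts = (F T' \ F Ts).erase e := by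
        ext g
        rw [hT2F]
        simp only [Finset.mem_sdiff, Finset.mem_erase, Finset.mem_insert,
          Finset.mem_erase]
        constructor
        · rintro ⟨rfl | ⟨hne1, hmem1⟩, hnot⟩
          · exact absurd hfTs hnot
          · exact ⟨hne1, hmem1, hnot⟩
        · rintro ⟨h1, h2, h3⟩
          exact ⟨Or.inr ⟨h1, h2⟩, h3⟩
      have hcard2 : (F T2 \ F Ts).card ≤ n := by
        rw [hsdiff, Finset.card_erase_of_mem (Finset.mem_sdiff.mpr ⟨heFT', heTsF⟩)]
        omega
      by_cases hT2eq : T2 = Ts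
      · rw [← hT2eq]
        exact hwT2
      · exact (ih T2 hT2G hT2conn hT2card hT2eq hcard2).trans hwT2
  refine ⟨⟨hTsG, htree⟩, fun T' hT' hne => ?_⟩
  obtain ⟨hle, htree'⟩ := hT'
  exact main _ T' hle htree'.isConnected (hcardtree T' htree') hne le_rfl
end
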